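/- Let f : [0,1)² → ℝ be the step function f(x,y) = a_{i,j} for (x,y) ∈ [(i−1)/n, i/n) × [(j−1)/n, j/n), where A = (a_{i,j}) is a real n×n matrix. Then for every probability measure μ on [0,1)² whose marginals are both the uniform distribution on [0,1), ∫ f dμ ≤ (1/n) max_{σ ∈ S_n} Σ_{i=1}^n a_{i,σ(i)}, and this bound is attained by some such measure. -/

import Mathlib

open MeasureTheory

/-- `μ` is a probability measure on `[0,1)²` both of whose marginals are the uniform
distribution on `[0,1)`. -/
def UniformMarginals (μ : Measure (ℝ × ℝ)) : Prop :=
  IsProbabilityMeasure μ ∧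
    ∀ B : Set ℝ, MeasurableSet B → B ⊆ Set.Ico 0 1 →
      μ (B ×ˢ Set.Ico (0 : ℝ) 1) = volume B ∧ μ (Set.Ico (0 : ℝ) 1 ×ˢ B) = volume B

namespace Stmt18Aux

variable {n : ℕ}

/-- The `i`-th subinterval. -/
def I (n : ℕ) (i : Fin n) : Set ℝ :=
  Set.Ico (((i : ℕ) : ℝ) / n) ((((i : ℕ) : ℝ) + 1) / n)

lemma measurableSet_I (i : Fin n) : MeasurableSet (I n i) := measurableSet_Ico

lemma I_subset (i : Fin n) : I n i ⊆ Set.Ico (0 : ℝ) 1 := by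
  have hn : (0:ℝ) < n := by
    have := i.pos; exact_mod_cast this
  intro x hx
  obtain ⟨h1, h2⟩ := hx
  constructor
  · have : (0:ℝ) ≤ ((i:ℕ):ℝ) / n := by positivity
    linarith
  · have hi : ((i:ℕ):ℝ) + 1 ≤ n := by
      have := i.2; exact_mod_cast this
    have : (((i:ℕ):ℝ) + 1) / n ≤ 1 := by
      rw [div_le_one hn]; exact hi
    linarith

lemma I_disjoint {i j : Fin n} (h : i ≠ j) : Disjoint (I n i) (I n j) := by
  have hn : (0:ℝ) < n := by have := i.pos; exact_mod_cast this
  rw [I, I, Set.Ico_disjoint_Ico]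
  rcases h.lt_or_gt with h' | h'
  · have : ((i:ℕ):ℝ) + 1 ≤ ((j:ℕ):ℝ) := by exact_mod_cast h'
    refine le_trans (inf_le_left) (le_trans ?_ le_sup_right)
    gcongr
  · have : ((j:ℕ):ℝ) + 1 ≤ ((i:ℕ):ℝ) := by exact_mod_cast h'
    refine le_trans (inf_le_right) (le_trans ?_ le_sup_left)
    gcongr

lemma exists_mem_I (hn : 0 < n) {x : ℝ} (hx : x ∈ Set.Ico (0:ℝ) 1) :
    ∃ i : Fin n, x ∈ I n i := by
  have hn' : (0:ℝ) < n := by exact_mod_cast hn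
  have h0 : (0:ℝ) ≤ x * n := mul_nonneg hx.1 hn'.le
  have h1 : x * n < n := by nlinarith [hx.2]
  have hfl0 : 0 ≤ ⌊x * n⌋ := Int.floor_nonneg.2 h0
  have hfln : ⌊x * n⌋ < (n : ℤ) := Int.floor_lt.2 (by exact_mod_cast h1)
  refine ⟨⟨⌊x * n⌋.toNat, by omega⟩, ?_, ?_⟩
  · have : ((⌊x * n⌋.toNat : ℕ) : ℝ) = (⌊x * n⌋ : ℝ) := by
      exact_mod_cast congrArg Int.cast (Int.toNat_of_nonneg hfl0)
    simp only [this]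
    rw [div_le_iff₀ hn']
    exact Int.floor_le _
  · have : ((⌊x * n⌋.toNat : ℕ) : ℝ) = (⌊x * n⌋ : ℝ) := by
      exact_mod_cast congrArg Int.cast (Int.toNat_of_nonneg hfl0)
    simp only [this]
    rw [lt_div_iff₀ hn']
    exact Int.lt_floor_add_one _

lemma iUnion_I (hn : 0 < n) : (⋃ i : Fin n, I n i) = Set.Ico (0:ℝ) 1 := by
  apply subset_antisymm
  · exact Set.iUnion_subset fun i => I_subset i
  · intro x hx
    obtain ⟨i, hi⟩ := exists_mem_I hn hx
    exact Set.mem_iUnion.2 ⟨i, hi⟩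

lemma volume_I (hn : 0 < n) (i : Fin n) : volume (I n i) = ENNReal.ofReal (1 / n) := by
  have hn' : (0:ℝ) < n := by exact_mod_cast hn
  rw [I, Real.volume_Ico]
  congr 1
  field_simp
  ring

/-- The `(i,j)`-th square. -/
def Q (n : ℕ) (i j : Fin n) : Set (ℝ × ℝ) := I n i ×ˢ I n j

lemma measurableSet_Q (i j : Fin n) : MeasurableSet (Q n i j) :=
  (measurableSet_I i).prod (measurableSet_I j)

lemma Q_disjoint_right {i i' j j' : Fin n} (h : j ≠ j') : Disjoint (Q n i j) (Q n i' j') :=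
  Disjoint.mono (Set.prod_subset_preimage_snd _ _) (Set.prod_subset_preimage_snd _ _)
    ((I_disjoint h).preimage Prod.snd)

lemma Q_disjoint_left {i i' j j' : Fin n} (h : i ≠ i') : Disjoint (Q n i j) (Q n i' j') :=
  Disjoint.mono (Set.prod_subset_preimage_fst _ _) (Set.prod_subset_preimage_fst _ _)
    ((I_disjoint h).preimage Prod.fst)

lemma integral_step (hn : 0 < n) (a : Fin n → Fin n → ℝ) (μ : Measure (ℝ × ℝ))
    [IsFiniteMeasure μ] :
    (∫ p, (∑ i : Fin n, ∑ j : Fin n,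
        Set.indicator (Q n i j) (fun _ => a i j) p) ∂μ) =
      ∑ i : Fin n, ∑ j : Fin n, (μ (Q n i j)).toReal * a i j := by
  rw [integral_finset_sum]
  · refine Finset.sum_congr rfl fun i _ => ?_
    rw [integral_finset_sum]
    · refine Finset.sum_congr rfl fun j _ => ?_
      rw [integral_indicator_const _ (measurableSet_Q i j)]
      simp [mul_comm]
      exact Or.inl rfl
    · exact fun j _ => (integrable_const _).indicator (measurableSet_Q i j)
  · exact fun i _ => integrable_finset_sum _
      fun j _ => (integrable_const _).indicator (measurableSet_Q i j)

lemma row_sum (hn : 0 < n) (μ : Measure (ℝ × ℝ)) (hμ : UniformMarginals μ) (i : Fin n) :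
    ∑ j : Fin n, (μ (Q n i j)).toReal = 1 / n := by
  have hfin : IsProbabilityMeasure μ := hμ.1
  have h1 : μ (⋃ j ∈ Finset.univ, Q n i j) = ∑ j : Fin n, μ (Q n i j) :=
    measure_biUnion_finset
      (fun j _ k _ hjk => Q_disjoint_right hjk) (fun j _ => measurableSet_Q i j)
  have h2 : (⋃ j ∈ Finset.univ, Q n i j) = I n i ×ˢ Set.Ico (0:ℝ) 1 := by
    simp only [Finset.mem_univ, Set.iUnion_true, Q, ← Set.prod_iUnion, iUnion_I hn]
  have h3 : μ (I n i ×ˢ Set.Ico (0:ℝ) 1) = volume (I n i) :=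
    (hμ.2 (I n i) (measurableSet_I i) (I_subset i)).1
  have h4 : ∑ j : Fin n, μ (Q n i j) = ENNReal.ofReal (1 / n) := by
    rw [← h1, h2, h3, volume_I hn]
  calc ∑ j : Fin n, (μ (Q n i j)).toReal
      = (∑ j : Fin n, μ (Q n i j)).toReal :=
        (ENNReal.toReal_sum (fun j _ => measure_ne_top μ _)).symm
    _ = 1 / n := by rw [h4]; exact ENNReal.toReal_ofReal (by positivity)

lemma col_sum (hn : 0 < n) (μ : Measure (ℝ × ℝ)) (hμ : UniformMarginals μ) (j : Fin n) :
    ∑ i : Fin n, (μ (Q n i j)).toReal = 1 / n := by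
  have hfin : IsProbabilityMeasure μ := hμ.1
  have h1 : μ (⋃ i ∈ Finset.univ, Q n i j) = ∑ i : Fin n, μ (Q n i j) :=
    measure_biUnion_finset
      (fun i _ k _ hik => Q_disjoint_left hik) (fun i _ => measurableSet_Q i j)
  have h2 : (⋃ i ∈ Finset.univ, Q n i j) = Set.Ico (0:ℝ) 1 ×ˢ I n j := by
    simp only [Finset.mem_univ, Set.iUnion_true, Q, ← Set.iUnion_prod_const, iUnion_I hn]
  have h3 : μ (Set.Ico (0:ℝ) 1 ×ˢ I n j) = volume (I n j) :=
    (hμ.2 (I n j) (measurableSet_I j) (I_subset j)).2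
  have h4 : ∑ i : Fin n, μ (Q n i j) = ENNReal.ofReal (1 / n) := by
    rw [← h1, h2, h3, volume_I hn]
  calc ∑ i : Fin n, (μ (Q n i j)).toReal
      = (∑ i : Fin n, μ (Q n i j)).toReal :=
        (ENNReal.toReal_sum (fun i _ => measure_ne_top μ _)).symm
    _ = 1 / n := by rw [h4]; exact ENNReal.toReal_ofReal (by positivity)

/-- The key combinatorial bound via Birkhoff's theorem. -/
lemma sum_le_sup (hn : 0 < n) (a : Fin n → Fin n → ℝ) (M : Fin n → Fin n → ℝ)
    (hM0 : ∀ i j, 0 ≤ M i j) (hMr : ∀ i, ∑ j, M i j = 1 / n) (hMc : ∀ j, ∑ i, M i j = 1 / n) :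
    ∑ i : Fin n, ∑ j : Fin n, M i j * a i j ≤
      (1 / (n : ℝ)) * Finset.univ.sup' ⟨1, Finset.mem_univ 1⟩
        (fun σ : Equiv.Perm (Fin n) => ∑ i, a i (σ i)) := by
  have hn' : (0:ℝ) < n := by exact_mod_cast hn
  set D : Matrix (Fin n) (Fin n) ℝ := Matrix.of (fun i j => (n : ℝ) * M i j) with hD
  have hDmem : D ∈ doublyStochastic ℝ (Fin n) := by
    rw [mem_doublyStochastic_iff_sum]
    refine ⟨fun i j => mul_nonneg hn'.le (hM0 i j), fun i => ?_, fun j => ?_⟩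
    · simp only [hD, Matrix.of_apply, ← Finset.mul_sum, hMr i]
      field_simp
    · simp only [hD, Matrix.of_apply, ← Finset.mul_sum, hMc j]
      field_simp
  obtain ⟨w, hw0, hw1, hwD⟩ := exists_eq_sum_perm_of_mem_doublyStochastic hDmem
  set S := Finset.univ.sup' ⟨1, Finset.mem_univ 1⟩
      (fun σ : Equiv.Perm (Fin n) => ∑ i, a i (σ i)) with hS
  have key : ∑ i : Fin n, ∑ j : Fin n, D i j * a i j ≤ S := by
    have hDij : ∀ i j, D i j = ∑ σ : Equiv.Perm (Fin n), w σ * (σ.permMatrix ℝ) i j := by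
      intro i j
      rw [← hwD]
      simp only [Matrix.sum_apply, Matrix.smul_apply, smul_eq_mul]
    calc ∑ i : Fin n, ∑ j : Fin n, D i j * a i j
        = ∑ i : Fin n, ∑ σ : Equiv.Perm (Fin n), w σ * a i (σ i) := by
          refine Finset.sum_congr rfl fun i _ => ?_
          have h1 : (∑ j, D i j * a i j)
              = ∑ j, ∑ σ : Equiv.Perm (Fin n), (w σ * (σ.permMatrix ℝ) i j) * a i j :=
            Finset.sum_congr rfl fun j _ => by rw [hDij i j, Finset.sum_mul]
          rw [h1, Finset.sum_comm]
          refine Finset.sum_congr rfl fun σ _ => ?_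
          simp [Equiv.Perm.permMatrix, PEquiv.toMatrix_apply, Equiv.toPEquiv_apply,
            mul_ite, ite_mul, Finset.sum_ite_eq']
      _ = ∑ σ : Equiv.Perm (Fin n), w σ * ∑ i, a i (σ i) := by
          rw [Finset.sum_comm]
          simp [Finset.mul_sum]
      _ ≤ ∑ σ : Equiv.Perm (Fin n), w σ * S := by
          refine Finset.sum_le_sum fun σ _ => ?_
          exact mul_le_mul_of_nonneg_left
            (Finset.le_sup' (fun σ : Equiv.Perm (Fin n) => ∑ i, a i (σ i))
              (Finset.mem_univ σ)) (hw0 σ)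
      _ = S := by rw [← Finset.sum_mul, hw1, one_mul]
  have : ∑ i : Fin n, ∑ j : Fin n, M i j * a i j
      = (1/(n:ℝ)) * ∑ i : Fin n, ∑ j : Fin n, D i j * a i j := by
    simp only [hD, Matrix.of_apply, Finset.mul_sum]
    refine Finset.sum_congr rfl fun i _ => Finset.sum_congr rfl fun j _ => ?_
    field_simp
  rw [this]
  exact mul_le_mul_of_nonneg_left key (by positivity)


section Construction

variable (σ₀ : Equiv.Perm (Fin n))

/-- Shift of the `i`-th interval onto the `σ₀ i`-th interval. -/
noncomputable def c (σ₀ : Equiv.Perm (Fin n)) (i : Fin n) : ℝ :=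
  (((σ₀ i : ℕ) : ℝ) - ((i : ℕ) : ℝ)) / n

/-- The piecewise translation realizing the permutation `σ₀`. -/
noncomputable def sfun (n : ℕ) (σ₀ : Equiv.Perm (Fin n)) : ℝ → ℝ :=
  fun x => x + ∑ i : Fin n, Set.indicator (I n i) (fun _ => c σ₀ i) x

lemma measurable_sfun : Measurable (sfun n σ₀) :=
  measurable_id.add (Finset.measurable_sum _
    fun i _ => measurable_const.indicator (measurableSet_I i))

lemma sfun_eq {x : ℝ} {i : Fin n} (hx : x ∈ I n i) : sfun n σ₀ x = x + c σ₀ i := by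
  unfold sfun
  congr 1
  rw [Finset.sum_eq_single i]
  · exact Set.indicator_of_mem hx _
  · intro j _ hj
    exact Set.indicator_of_notMem
      (fun hxj => (Set.disjoint_left.1 (I_disjoint hj) hxj) hx) _
  · exact fun h => absurd (Finset.mem_univ i) h

lemma mem_I_add_c {x : ℝ} {i : Fin n} : x ∈ I n i ↔ x + c σ₀ i ∈ I n (σ₀ i) := by
  have hb : ((((σ₀ i : Fin n) : ℕ) : ℝ)) / n = ((i : ℕ) : ℝ) / n + c σ₀ i := by
    unfold c; ring
  have hb1 : (((((σ₀ i : Fin n) : ℕ) : ℝ)) + 1) / n = (((i : ℕ) : ℝ) + 1) / n + c σ₀ i := by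
    unfold c; ring
  unfold I
  simp only [Set.mem_Ico, hb, hb1]
  constructor
  · rintro ⟨h1, h2⟩; constructor <;> linarith
  · rintro ⟨h1, h2⟩; constructor <;> linarith

/-- The measure attaining the bound. -/
noncomputable def mu0 (n : ℕ) (σ₀ : Equiv.Perm (Fin n)) : Measure (ℝ × ℝ) :=
  Measure.map (fun x => (x, sfun n σ₀ x)) (volume.restrict (Set.Ico (0:ℝ) 1))

lemma measurable_g : Measurable (fun x => (x, sfun n σ₀ x)) :=
  measurable_id.prodMk (measurable_sfun σ₀)

lemma mu0_apply {A : Set (ℝ × ℝ)} (hA : MeasurableSet A) :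
    mu0 n σ₀ A = volume ((fun x => (x, sfun n σ₀ x)) ⁻¹' A ∩ Set.Ico (0:ℝ) 1) := by
  rw [mu0, Measure.map_apply (measurable_g σ₀) hA,
    Measure.restrict_apply (measurable_g σ₀ hA)]

lemma sfun_preimage_inter (B : Set ℝ) (i : Fin n) :
    sfun n σ₀ ⁻¹' B ∩ I n i = (fun x => x + c σ₀ i) ⁻¹' (B ∩ I n (σ₀ i)) := by
  ext x
  simp only [Set.mem_inter_iff, Set.mem_preimage]
  constructor
  · rintro ⟨hB, hi⟩
    have := (mem_I_add_c σ₀).1 hi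
    rw [sfun_eq σ₀ hi] at hB
    exact ⟨hB, this⟩
  · rintro ⟨hB, hσ⟩
    have hi : x ∈ I n i := (mem_I_add_c σ₀).2 hσ
    rw [sfun_eq σ₀ hi]
    exact ⟨hB, hi⟩

lemma sfun_mem (hn : 0 < n) {x : ℝ} (hx : x ∈ Set.Ico (0:ℝ) 1) :
    sfun n σ₀ x ∈ Set.Ico (0:ℝ) 1 := by
  obtain ⟨i, hi⟩ := exists_mem_I hn hx
  rw [sfun_eq σ₀ hi]
  exact I_subset (σ₀ i) ((mem_I_add_c σ₀).1 hi)

lemma mu0_prob (hn : 0 < n) : IsProbabilityMeasure (mu0 n σ₀) := by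
  constructor
  rw [mu0_apply σ₀ MeasurableSet.univ]
  simp [Real.volume_Ico]

lemma volume_sum_perm (hn : 0 < n) {B : Set ℝ} (hB : MeasurableSet B)
    (hBsub : B ⊆ Set.Ico (0:ℝ) 1) :
    ∑ i : Fin n, volume (B ∩ I n (σ₀ i)) = volume B := by
  have h1 : ∑ i : Fin n, volume (B ∩ I n (σ₀ i)) = ∑ j : Fin n, volume (B ∩ I n j) :=
    Equiv.sum_comp σ₀ (fun j => volume (B ∩ I n j))
  have h2 : (⋃ j ∈ Finset.univ, B ∩ I n j) = B := by
    simp only [Finset.mem_univ, Set.iUnion_true, ← Set.inter_iUnion, iUnion_I hn]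
    exact Set.inter_eq_left.2 hBsub
  have h3 : volume (⋃ j ∈ Finset.univ, B ∩ I n j) = ∑ j : Fin n, volume (B ∩ I n j) :=
    measure_biUnion_finset
      (fun j _ k _ hjk => ((I_disjoint hjk).mono Set.inter_subset_right
        Set.inter_subset_right))
      (fun j _ => hB.inter (measurableSet_I j))
  rw [h1, ← h3, h2]

lemma mu0_marginals (hn : 0 < n) : UniformMarginals (mu0 n σ₀) := by
  refine ⟨mu0_prob σ₀ hn, fun B hB hBsub => ?_⟩
  constructor
  · rw [mu0_apply σ₀ (hB.prod measurableSet_Ico)]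
    have : (fun x => (x, sfun n σ₀ x)) ⁻¹' (B ×ˢ Set.Ico (0:ℝ) 1) ∩ Set.Ico (0:ℝ) 1 = B := by
      ext x
      simp only [Set.mem_inter_iff, Set.mem_preimage, Set.mem_prod]
      constructor
      · rintro ⟨⟨hxB, _⟩, _⟩; exact hxB
      · intro hxB
        have hx01 : x ∈ Set.Ico (0:ℝ) 1 := hBsub hxB
        exact ⟨⟨hxB, sfun_mem σ₀ hn hx01⟩, hx01⟩
    rw [this]
  · rw [mu0_apply σ₀ (measurableSet_Ico.prod hB)]
    have hset : (fun x => (x, sfun n σ₀ x)) ⁻¹' (Set.Ico (0:ℝ) 1 ×ˢ B) ∩ Set.Ico (0:ℝ) 1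
        = ⋃ i ∈ Finset.univ, (sfun n σ₀ ⁻¹' B ∩ I n i) := by
      ext x
      simp only [Set.mem_inter_iff, Set.mem_preimage, Set.mem_prod, Finset.mem_univ,
        Set.iUnion_true, Set.mem_iUnion]
      constructor
      · rintro ⟨⟨_, hxB⟩, hx01⟩
        obtain ⟨i, hi⟩ := exists_mem_I hn hx01
        exact ⟨i, hxB, hi⟩
      · rintro ⟨i, hxB, hi⟩
        have hx01 : x ∈ Set.Ico (0:ℝ) 1 := I_subset i hi
        exact ⟨⟨hx01, hxB⟩, hx01⟩
    rw [hset, measure_biUnion_finset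
      (fun i _ k _ hik => ((I_disjoint hik).mono Set.inter_subset_right
        Set.inter_subset_right))
      (fun i _ => ((measurable_sfun σ₀) hB).inter (measurableSet_I i))]
    calc ∑ i : Fin n, volume (sfun n σ₀ ⁻¹' B ∩ I n i)
        = ∑ i : Fin n, volume (B ∩ I n (σ₀ i)) := by
          refine Finset.sum_congr rfl fun i _ => ?_
          rw [sfun_preimage_inter σ₀ B i]
          exact measure_preimage_add_right volume (c σ₀ i) (B ∩ I n (σ₀ i))
      _ = volume B := volume_sum_perm σ₀ hn hB hBsub

lemma mu0_Q (hn : 0 < n) (i j : Fin n) :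
    mu0 n σ₀ (Q n i j) = if j = σ₀ i then ENNReal.ofReal (1 / n) else 0 := by
  rw [mu0_apply σ₀ (measurableSet_Q i j)]
  have hset : (fun x => (x, sfun n σ₀ x)) ⁻¹' (Q n i j) ∩ Set.Ico (0:ℝ) 1
      = sfun n σ₀ ⁻¹' (I n j) ∩ I n i := by
    ext x
    simp only [Set.mem_inter_iff, Set.mem_preimage, Q, Set.mem_prod]
    constructor
    · rintro ⟨⟨hi, hj⟩, _⟩; exact ⟨hj, hi⟩
    · rintro ⟨hj, hi⟩; exact ⟨⟨hi, hj⟩, I_subset i hi⟩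
  rw [hset, sfun_preimage_inter σ₀ (I n j) i,
    measure_preimage_add_right volume (c σ₀ i) (I n j ∩ I n (σ₀ i))]
  by_cases h : j = σ₀ i
  · subst h
    rw [Set.inter_self, volume_I hn]
    simp
  · rw [Set.disjoint_iff_inter_eq_empty.1 (I_disjoint h)]
    simp [h]

end Construction

end Stmt18Aux

/-- For the step function `f(x,y) = a_{i,j}` on `[(i−1)/n, i/n) × [(j−1)/n, j/n)`,
every measure on `[0,1)²` with uniform marginals satisfies
`∫ f dμ ≤ (1/n)·max_{σ ∈ S_n} Σ_i a_{i,σ(i)}`, and the bound is attained. -/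
theorem stmt18 (n : ℕ) (hn : 0 < n) (a : Fin n → Fin n → ℝ) (f : ℝ × ℝ → ℝ)
    (hf : f = fun p => ∑ i : Fin n, ∑ j : Fin n,
      Set.indicator
        (Set.Ico (((i : ℕ) : ℝ) / n) ((((i : ℕ) : ℝ) + 1) / n) ×ˢ
          Set.Ico (((j : ℕ) : ℝ) / n) ((((j : ℕ) : ℝ) + 1) / n))
        (fun _ => a i j) p) :
    (∀ μ : Measure (ℝ × ℝ), UniformMarginals μ →
      ∫ p, f p ∂μ ≤ (1 / (n : ℝ)) *
        Finset.univ.sup' ⟨1, Finset.mem_univ 1⟩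
          (fun σ : Equiv.Perm (Fin n) => ∑ i, a i (σ i))) ∧
    (∃ μ : Measure (ℝ × ℝ), UniformMarginals μ ∧
      ∫ p, f p ∂μ = (1 / (n : ℝ)) *
        Finset.univ.sup' ⟨1, Finset.mem_univ 1⟩
          (fun σ : Equiv.Perm (Fin n) => ∑ i, a i (σ i))) := by
  have hn' : (0:ℝ) < n := by exact_mod_cast hn
  have hfQ : f = fun p => ∑ i : Fin n, ∑ j : Fin n,
      Set.indicator (Stmt18Aux.Q n i j) (fun _ => a i j) p := hf
  constructor
  · intro μ hμ
    haveI : IsProbabilityMeasure μ := hμ.1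
    rw [hfQ, Stmt18Aux.integral_step hn a μ]
    exact Stmt18Aux.sum_le_sup hn a (fun i j => (μ (Stmt18Aux.Q n i j)).toReal)
      (fun i j => ENNReal.toReal_nonneg)
      (Stmt18Aux.row_sum hn μ hμ) (Stmt18Aux.col_sum hn μ hμ)
  · obtain ⟨σ₀, _, hσ₀⟩ := Finset.exists_mem_eq_sup'
      (⟨1, Finset.mem_univ 1⟩ : (Finset.univ : Finset (Equiv.Perm (Fin n))).Nonempty)
      (fun σ : Equiv.Perm (Fin n) => ∑ i, a i (σ i))
    refine ⟨Stmt18Aux.mu0 n σ₀, Stmt18Aux.mu0_marginals σ₀ hn, ?_⟩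
    haveI : IsProbabilityMeasure (Stmt18Aux.mu0 n σ₀) := Stmt18Aux.mu0_prob σ₀ hn
    rw [hfQ, Stmt18Aux.integral_step hn a _, hσ₀]
    have : ∀ i j : Fin n, ((Stmt18Aux.mu0 n σ₀) (Stmt18Aux.Q n i j)).toReal
        = if j = σ₀ i then (1 / (n:ℝ)) else 0 := by
      intro i j
      rw [Stmt18Aux.mu0_Q σ₀ hn i j]
      split
      · exact ENNReal.toReal_ofReal (by positivity)
      · simp
    simp only [this, ite_mul, zero_mul]
    rw [Finset.mul_sum]
    refine Finset.sum_congr rfl fun i _ => ?_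
    rw [Finset.sum_ite_eq' Finset.univ (σ₀ i) (fun j => (1:ℝ)/n * a i j)]
    simp
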